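/- For every finite-dimensional poset P, abs(P) ≤ dim(P). -/

import Mathlib

universe u

/-- The order dimension of a poset: the least cardinal `κ` such that the partial
order is the intersection of `κ` linear orderings (each extending it). -/
noncomputable def orderDim (α : Type u) [PartialOrder α] : Cardinal.{u} :=
  sInf {κ : Cardinal.{u} | ∃ (ι : Type u) (r : ι → α → α → Prop),
    (∀ i, IsLinearOrder α (r i)) ∧
    (∀ x y : α, x ≤ y ↔ ∀ i, r i x y) ∧
    Cardinal.mk ι = κ}

/-- The absorbency of a (finite-dimensional) poset `P`: the largest natural
number `n` such that taking the product of `P` with any `n`-tuple of (nonempty)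
chains does not change the dimension. -/
noncomputable def absorb (P : Type u) [PartialOrder P] : ℕ :=
  sSup {n : ℕ | ∀ (T : Fin n → Type u) [∀ i, LinearOrder (T i)] [∀ i, Nonempty (T i)],
    orderDim (P × ∀ i, T i) = orderDim P}

/-- The bounded dimension of a (finite-dimensional) poset `P`: the greatest
natural number `n` such that some bounded subposet of `P` (equivalently, some
nonempty interval `[p, p']`) has dimension `n`. -/
noncomputable def bdDim (P : Type u) [PartialOrder P] : ℕ :=
  sSup {n : ℕ | ∃ p p' : P, p ≤ p' ∧ orderDim ↥(Set.Icc p p') = n}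

/-- Every partial order has a realizer: it is the intersection of its linear
extensions (Szpilrajn). -/
lemma realizer_exists (α : Type u) [PartialOrder α] :
    ∃ (ι : Type u) (r : ι → α → α → Prop),
      (∀ i, IsLinearOrder α (r i)) ∧ (∀ x y : α, x ≤ y ↔ ∀ i, r i x y) := by
  refine ⟨{s : α → α → Prop // IsLinearOrder α s ∧ ∀ a b : α, a ≤ b → s a b},
    fun s => s.1, fun s => s.2.1, fun x y => ⟨fun h s => s.2.2 x y h, fun h => ?_⟩⟩
  by_contra hxy
  -- build a partial order extending `≤` in which `y ≤ x`
  set r : α → α → Prop := fun a b => a ≤ b ∨ (a ≤ y ∧ x ≤ b) with hr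
  haveI : IsPartialOrder α r :=
    { refl := fun a => Or.inl le_rfl
      trans := by
        rintro a b c (hab | ⟨hay, hxb⟩) (hbc | ⟨hby, hxc⟩)
        · exact Or.inl (hab.trans hbc)
        · exact Or.inr ⟨hab.trans hby, hxc⟩
        · exact Or.inr ⟨hay, hxb.trans hbc⟩
        · exact absurd (hxb.trans hby) hxy
      antisymm := by
        rintro a b (hab | ⟨hay, hxb⟩) (hba | ⟨hby, hxa⟩)
        · exact le_antisymm hab hba
        · exact absurd ((hxa.trans hab).trans hby) hxy
        · exact absurd ((hxb.trans hba).trans hay) hxy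
        · exact absurd (hxb.trans hby) hxy }
  obtain ⟨s, hs, hrs⟩ := extend_partialOrder r
  have hmem : IsLinearOrder α s ∧ ∀ a b : α, a ≤ b → s a b :=
    ⟨hs, fun a b hab => hrs a b (Or.inl hab)⟩
  have hsyx : s y x := hrs y x (Or.inr ⟨le_rfl, le_rfl⟩)
  have hsxy : s x y := h ⟨s, hmem⟩
  have : x = y := hs.toIsPartialOrder.toAntisymm.antisymm x y hsxy hsyx
  exact hxy (this ▸ le_rfl)

/-- Any realizer of `P × ℕⁿ` has at least `n` members. -/
lemma card_realizer {P : Type u} [PartialOrder P] [Nonempty P] (n : ℕ)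
    (ι : Type u) (r : ι → (P × (Fin n → ULift.{u} ℕ)) → (P × (Fin n → ULift.{u} ℕ)) → Prop)
    (hlin : ∀ i, IsLinearOrder _ (r i))
    (hreal : ∀ x y : P × (Fin n → ULift.{u} ℕ), x ≤ y ↔ ∀ i, r i x y) :
    (n : Cardinal) ≤ Cardinal.mk ι := by
  obtain ⟨p⟩ := ‹Nonempty P›
  set a : Fin n → P × (Fin n → ULift.{u} ℕ) :=
    fun j => (p, fun i => if i = j then ⟨1⟩ else ⟨0⟩) with ha
  set b : Fin n → P × (Fin n → ULift.{u} ℕ) :=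
    fun j => (p, fun i => if i = j then ⟨0⟩ else ⟨1⟩) with hb
  have hnab : ∀ j, ¬ a j ≤ b j := by
    intro j hle
    have := hle.2 j
    simp [ha, hb, ULift.up_le] at this
  have hab : ∀ j j', j ≠ j' → a j ≤ b j' := by
    intro j j' hne
    refine ⟨le_rfl, fun i => ?_⟩
    by_cases h1 : i = j <;> by_cases h2 : i = j' <;>
      simp_all [ha, hb, ULift.up_le]
  have hex : ∀ j, ∃ i, ¬ r i (a j) (b j) := by
    intro j
    by_contra hc
    push_neg at hc
    exact hnab j ((hreal (a j) (b j)).2 hc)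
  choose f hf using hex
  have hfinj : Function.Injective f := by
    intro j j' hjj
    by_contra hne
    have h1 : r (f j) (b j') (a j') := by
      rcases (hlin (f j)).total (a j') (b j') with h | h
      · exact absurd h (hjj ▸ hf j')
      · exact h
    have h2 : r (f j) (a j) (b j') := (hreal _ _).1 (hab j j' hne) (f j)
    have h3 : r (f j) (a j') (b j) := (hreal _ _).1 (hab j' j (Ne.symm hne)) (f j)
    exact hf j ((hlin (f j)).trans _ _ _ ((hlin (f j)).trans _ _ _ h2 h1) h3)
  have hinj : Function.Injective (fun j : ULift.{u} (Fin n) => f j.down) := by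
    intro x y h
    exact ULift.ext x y (hfinj h)
  have hle := Cardinal.mk_le_of_injective hinj
  simpa [Cardinal.mk_uLift, Cardinal.mk_fin, Cardinal.lift_natCast] using hle

theorem stmt13 (P : Type u) [PartialOrder P] [Nonempty P]
    (hfd : orderDim P < Cardinal.aleph0) :
    (absorb P : Cardinal) ≤ orderDim P := by
  obtain ⟨d, hd⟩ := Cardinal.lt_aleph0.mp hfd
  rw [hd, Nat.cast_le]
  apply csSup_le'
  intro n hn
  have heq := hn (fun _ => ULift.{u} ℕ)
  have hge : (n : Cardinal) ≤ orderDim (P × ∀ _ : Fin n, ULift.{u} ℕ) := by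
    apply le_csInf
    · obtain ⟨ι, r, h1, h2⟩ := realizer_exists (P × ∀ _ : Fin n, ULift.{u} ℕ)
      exact ⟨Cardinal.mk ι, ι, r, h1, h2, rfl⟩
    · rintro κ ⟨ι, r, h1, h2, rfl⟩
      exact card_realizer n ι r h1 h2
  rw [heq, hd] at hge
  exact_mod_cast hge
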